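/- arXiv:1402.4462 — 4 statements merged into one kernel-verified Lean document; each statement's English description precedes it below -/
import Mathlib

section
/- For all integers k > r ≥ 2 and real x ∈ [0,1], g_r^r(x) - g_k^r(x) = ∑_{i=r}^{k-1} C(i, r-1) x^{i-r} (1-x)^r. -/
/-- `g_k^r(x) = ∑_{i=0}^{r-1} C(k,i) x^{k-i-1} (1-x)^i`. -/
noncomputable def gfun (k r : ℕ) (x : ℝ) : ℝ :=
  ∑ i ∈ Finset.range r, (k.choose i : ℝ) * x ^ (k - i - 1) * (1 - x) ^ i

lemma gfun_step (s m : ℕ) (hm : s + 1 ≤ m) (x : ℝ) :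
    gfun m (s+1) x - gfun (m+1) (s+1) x
      = (m.choose s : ℝ) * x ^ (m - (s+1)) * (1 - x) ^ (s+1) := by
  set a : ℕ → ℝ := fun i => (m.choose i : ℝ) * x ^ (m - i) * (1 - x) ^ i with ha
  set f : ℕ → ℝ := fun i => (m.choose i : ℝ) * x ^ (m - i - 1) * (1 - x) ^ (i+1) with hf
  have hsplit : gfun m (s+1) x
      = (∑ i ∈ Finset.range (s+1), a i) + ∑ i ∈ Finset.range (s+1), f i := by
    rw [gfun, ← Finset.sum_add_distrib]
    refine Finset.sum_congr rfl fun i hi => ?_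
    have hi' : i < m := lt_of_lt_of_le (Finset.mem_range.mp hi) hm
    obtain ⟨e, he⟩ : ∃ e, m - i = e + 1 := ⟨m - i - 1, by omega⟩
    simp only [ha, hf, he, Nat.add_sub_cancel, pow_succ]
    ring
  have hA : ∑ i ∈ Finset.range (s+1), a i
      = (∑ i ∈ Finset.range s, a (i+1)) + a 0 := Finset.sum_range_succ' a s
  have hB : ∑ i ∈ Finset.range (s+1), f i
      = (∑ i ∈ Finset.range s, f i) + f s := Finset.sum_range_succ f s
  have hG : gfun (m+1) (s+1) x
      = (∑ i ∈ Finset.range s, (a (i+1) + f i)) + a 0 := by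
    rw [gfun, Finset.sum_range_succ']
    congr 1
    · refine Finset.sum_congr rfl fun i hi => ?_
      have h1 : m + 1 - (i+1) - 1 = m - (i+1) := by omega
      have h2 : m - (i+1) = m - i - 1 := by omega
      simp only [ha, hf, Nat.choose_succ_succ, h1, h2, Nat.cast_add]
      ring
    · simp only [ha]
      norm_num
  have h3 : m - (s+1) = m - s - 1 := by omega
  rw [hsplit, hA, hB, hG, Finset.sum_add_distrib, hf, h3]
  ring

/-- For all integers `k > r ≥ 2` and real `x ∈ [0,1]`,
`g_r^r(x) - g_k^r(x) = ∑_{i=r}^{k-1} C(i, r-1) x^{i-r} (1-x)^r`. -/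
theorem stmt_1 (r k : ℕ) (hr : 2 ≤ r) (hk : r < k) (x : ℝ)
    (hx : x ∈ Set.Icc (0:ℝ) 1) :
    gfun r r x - gfun k r x
      = ∑ i ∈ Finset.Ico r k, (i.choose (r - 1) : ℝ) * x ^ (i - r) * (1 - x) ^ r := by
  obtain ⟨s, rfl⟩ : ∃ s, r = s + 1 := ⟨r - 1, by omega⟩
  clear hr
  induction k, hk using Nat.le_induction with
  | base =>
    rw [Nat.succ_eq_add_one, Finset.sum_Ico_succ_top le_rfl, Finset.Ico_self,
      Finset.sum_empty, zero_add, gfun_step s (s+1) le_rfl x]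
    simp
  | succ m hm ih =>
    rw [Finset.sum_Ico_succ_top (by omega), ← ih, Nat.add_sub_cancel]
    have := gfun_step s m (by omega) x
    linarith [this]
end

section
/- For all integers k > r ≥ 2 and real α ∈ (0, r-1) with α not an integer, ∫_0^1 (g_r^r(x) - g_k^r(x)) / (1-x)^{α+2} dx = ∑_{i=r}^{k-1} C(i, r-1) · B(i-r+1, r-1-α), where B denotes the Beta function. -/
/-- The Beta function `B(x,y) = ∫_0^1 t^{x-1} (1-t)^{y-1} dt`. -/
noncomputable def Beta (x y : ℝ) : ℝ :=
  ∫ t in (0:ℝ)..1, t ^ (x - 1) * (1 - t) ^ (y - 1)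

lemma gfun_telescope (x : ℝ) (k m : ℕ) (h : m + 1 ≤ k) :
    gfun k (m+1) x - gfun (k+1) (m+1) x
      = (k.choose m : ℝ) * x ^ (k - (m+1)) * (1-x)^(m+1) := by
  induction m with
  | zero =>
      have hk : x ^ k = x ^ (k - 1) * x := by
        rw [← pow_succ]; congr 1; omega
      norm_num [gfun, Finset.sum_range_one, hk]
      ring
  | succ m ih =>
      have hmk : m + 1 ≤ k := by omega
      have IH := ih hmk
      have e1 : k - (m+1) - 1 = k - m - 2 := by omega
      have e2 : k + 1 - (m+1) - 1 = k - m - 1 := by omega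
      have e3 : x ^ (k - m - 1) = x ^ (k - m - 2) * x := by
        rw [← pow_succ]; congr 1; omega
      have e4 : k - (m+2) = k - m - 2 := by omega
      have e5 : k - (m+1) = k - m - 1 := by omega
      have hch : ((k+1).choose (m+1) : ℝ) = (k.choose m : ℝ) + (k.choose (m+1) : ℝ) := by
        rw [Nat.choose_succ_succ]; push_cast; ring
      simp only [gfun, Finset.sum_range_succ] at IH ⊢
      rw [e1, e2, e4, hch] at *
      rw [e5] at IH
      rw [e3] at *
      linear_combination IH

lemma gfun_sum (x : ℝ) (r : ℕ) (hr : 1 ≤ r) :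
    ∀ k, r ≤ k → gfun r r x - gfun k r x
      = ∑ i ∈ Finset.Ico r k, (i.choose (r-1) : ℝ) * x ^ (i - r) * (1-x)^r := by
  intro k hk
  induction k, hk using Nat.le_induction with
  | base => simp
  | succ k hk ih =>
      rw [Finset.sum_Ico_succ_top hk, ← ih]
      have := gfun_telescope x k (r-1) (by omega)
      rw [Nat.sub_add_cancel hr] at this
      linarith [this]

/-- For all integers `k > r ≥ 2` and non-integer real `α ∈ (0, r-1)`,
`∫_0^1 (g_r^r(x) - g_k^r(x)) / (1-x)^{α+2} dx = ∑_{i=r}^{k-1} C(i,r-1) B(i-r+1, r-1-α)`. -/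
theorem stmt_4 (r k : ℕ) (hr : 2 ≤ r) (hk : r < k) (α : ℝ)
    (hα0 : 0 < α) (hα1 : α < (r : ℝ) - 1) (hni : ∀ n : ℤ, (n : ℝ) ≠ α) :
    (∫ x in (0:ℝ)..1, (gfun r r x - gfun k r x) / (1 - x) ^ (α + 2))
      = ∑ i ∈ Finset.Ico r k,
          (i.choose (r - 1) : ℝ) * Beta ((i : ℝ) - r + 1) ((r : ℝ) - 1 - α) := by
  set β : ℝ := (r : ℝ) - 1 - α with hβ
  have hβ1 : (-1 : ℝ) < β - 1 := by simp only [hβ]; linarith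
  -- integrability of each summand
  have hint : ∀ i ∈ Finset.Ico r k,
      IntervalIntegrable
        (fun t : ℝ => (i.choose (r-1) : ℝ) * (t ^ (i - r) * (1-t) ^ (β - 1)))
        MeasureTheory.volume 0 1 := by
    intro i _
    apply IntervalIntegrable.const_mul
    have h1 : IntervalIntegrable (fun t : ℝ => (1-t) ^ (β-1)) MeasureTheory.volume 0 1 := by
      have h0 := intervalIntegral.intervalIntegrable_rpow' (a := 0) (b := 1) hβ1
      have h2 := h0.comp_sub_left 1
      simpa using h2.symm
    exact h1.continuousOn_mul (Continuous.continuousOn (by continuity))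
  -- pointwise a.e. identity of integrands
  have hae : ∀ᵐ t : ℝ ∂MeasureTheory.volume, t ∈ Set.uIoc (0:ℝ) 1 →
      (gfun r r t - gfun k r t) / (1 - t) ^ (α + 2)
        = ∑ i ∈ Finset.Ico r k,
            (i.choose (r-1) : ℝ) * (t ^ (i - r) * (1-t) ^ (β - 1)) := by
    have hne : ∀ᵐ t : ℝ ∂MeasureTheory.volume, t ≠ 1 :=
      MeasureTheory.compl_mem_ae_iff.mpr (by exact MeasureTheory.measure_singleton (1:ℝ))
    filter_upwards [hne] with t ht1 htm
    rw [Set.uIoc_of_le (by norm_num)] at htm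
    have ht0 : 0 < t := htm.1
    have ht1' : t < 1 := lt_of_le_of_ne htm.2 ht1
    have h1t : (0:ℝ) < 1 - t := by linarith
    rw [gfun_sum t r (by omega) k (le_of_lt hk), Finset.sum_div]
    refine Finset.sum_congr rfl fun i _ => ?_
    have hpow : ((1-t) ^ (r : ℕ) : ℝ) = (1-t) ^ ((r : ℕ) : ℝ) := (Real.rpow_natCast _ _).symm
    have hsub : (1-t) ^ ((r:ℝ) - (α + 2)) = (1-t) ^ ((r:ℕ) : ℝ) / (1-t) ^ (α + 2) :=
      Real.rpow_sub h1t _ _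
    have he : (r:ℝ) - (α + 2) = β - 1 := by simp only [hβ]; ring
    rw [he] at hsub
    rw [mul_assoc, hpow, mul_div_assoc, mul_div_assoc, ← hsub]
  rw [intervalIntegral.integral_congr_ae hae,
    intervalIntegral.integral_finset_sum hint]
  refine Finset.sum_congr rfl fun i hi => ?_
  have hri : r ≤ i := (Finset.mem_Ico.mp hi).1
  rw [intervalIntegral.integral_const_mul]
  congr 1
  unfold Beta
  refine intervalIntegral.integral_congr fun t _ => ?_
  have hc : (i : ℝ) - r + 1 - 1 = ((i - r : ℕ) : ℝ) := by
    rw [Nat.cast_sub hri]; ring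
  rw [hc, Real.rpow_natCast]
end

section
/- For integers r ≥ 2, non-integer α ∈ (0, r-1) with t = ⌊α⌋, and real y ∈ (0,1], letting M = 1 + y + ⋯ + y^{r-1}: ∫_0^{1-y} (g_r^r(x) - M)/(1-x)^{2+α} dx ≥ y^{-α} ( 1/(α(α+1)) - y^α ∑_{i=0}^{t+1} 1/(α+1-i) ). -/
set_option maxHeartbeats 1000000


/-- `g_r^r(x) = ∑_{i=0}^{r-1} (1-x)^i`. -/
noncomputable def grr (r : ℕ) (x : ℝ) : ℝ := ∑ i ∈ Finset.range r, (1 - x) ^ i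

private lemma key_int {y : ℝ} (hy0 : 0 < y) (hy1 : y ≤ 1) (b : ℝ) (hb : b ≠ 0) :
    ∫ u in y..1, u ^ (b - 1) = (1 - y ^ b) / b := by
  have h : (0:ℝ) ∉ Set.uIcc y 1 := by
    rw [Set.uIcc_of_le hy1]
    rintro ⟨h0, _⟩; linarith
  rw [integral_rpow (Or.inr ⟨by intro hc; apply hb; linarith, h⟩)]
  rw [sub_add_cancel, Real.one_rpow]

/-- For `r ≥ 2`, non-integer `α ∈ (0, r-1)` with `t = ⌊α⌋`, and `y ∈ (0,1]`, with
`M = 1 + y + ⋯ + y^{r-1}`: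
`∫_0^{1-y} (g_r^r(x) - M)/(1-x)^{2+α} dx ≥ y^{-α} (1/(α(α+1)) - y^α ∑_{i=0}^{t+1} 1/(α+1-i))`. -/
theorem stmt_7 (r : ℕ) (hr : 2 ≤ r) (α : ℝ) (hα0 : 0 < α) (hα1 : α < (r : ℝ) - 1)
    (hni : ∀ n : ℤ, (n : ℝ) ≠ α) (t : ℕ) (ht : (t : ℝ) = (⌊α⌋ : ℝ))
    (y : ℝ) (hy : y ∈ Set.Ioc (0:ℝ) 1) (M : ℝ) (hM : M = ∑ i ∈ Finset.range r, y ^ i) :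
    (∫ x in (0:ℝ)..(1 - y), (grr r x - M) / (1 - x) ^ (2 + α))
      ≥ y ^ (-α) * (1 / (α * (α + 1)) - y ^ α * ∑ i ∈ Finset.range (t + 2), 1 / (α + 1 - i)) := by
  obtain ⟨hy0, hy1⟩ := hy
  have hα1p : (0:ℝ) < α + 1 := by linarith
  have hβne : ∀ i : ℕ, (i:ℝ) - 1 - α ≠ 0 := by
    intro i h
    exact hni ((i:ℤ) - 1) (by push_cast; linarith)
  have htα : (t:ℝ) < α := by
    rw [ht]; exact lt_of_le_of_ne (Int.floor_le α) (hni ⌊α⌋)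
  have hαt : α < (t:ℝ) + 1 := by
    rw [ht]; exact_mod_cast Int.lt_floor_add_one α
  have htr : t + 2 ≤ r := by
    have h1 : (t:ℝ) + 1 < (r:ℝ) := by linarith
    have h2 : t + 1 < r := by exact_mod_cast h1
    omega
  -- integrability of rpow on [y,1]
  have hcont : ∀ c : ℝ, IntervalIntegrable (fun u : ℝ => u ^ c) MeasureTheory.volume y 1 := by
    intro c
    apply ContinuousOn.intervalIntegrable
    intro u hu
    rw [Set.uIcc_of_le hy1] at hu
    exact (Real.continuousAt_rpow_const u c
      (Or.inl (ne_of_gt (lt_of_lt_of_le hy0 hu.1)))).continuousWithinAt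
  set A : ℕ → ℝ := fun i =>
    (1 - y ^ ((i:ℝ) - 1 - α)) / ((i:ℝ) - 1 - α) - y ^ i * ((1 - y ^ (-1 - α)) / (-1 - α))
    with hA
  -- rewrite of A
  have hArw : ∀ i : ℕ, A i =
      (1 - y ^ ((i:ℝ) - 1 - α)) / ((i:ℝ) - 1 - α)
        - (y ^ ((i:ℝ) - 1 - α) - y ^ ((i:ℝ))) / (α + 1) := by
    intro i
    have e1 : y ^ (i:ℕ) = y ^ ((i:ℝ)) := (Real.rpow_natCast y i).symm
    have e2 : y ^ ((i:ℝ)) * y ^ (-1 - α) = y ^ ((i:ℝ) - 1 - α) := by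
      rw [← Real.rpow_add hy0]; congr 1; ring
    rw [hA]
    simp only
    rw [e1, ← e2]
    have hne1 : (-1:ℝ) - α ≠ 0 := by intro h; linarith
    field_simp
    ring
  have hyirw : ∀ i : ℕ, y ^ ((i:ℝ)) = y ^ ((i:ℝ) - 1 - α) * y ^ (α + 1) := by
    intro i
    rw [← Real.rpow_add hy0]; congr 1; ring
  -- the integral equals the sum of A
  have hLHS : (∫ x in (0:ℝ)..(1 - y), (grr r x - M) / (1 - x) ^ (2 + α))
      = ∑ i ∈ Finset.range r, A i := by
    have h0 := intervalIntegral.integral_comp_sub_left (a := (0:ℝ)) (b := 1 - y)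
        (fun u => ((∑ i ∈ Finset.range r, u ^ i) - M) / u ^ (2 + α)) 1
    simp only [sub_sub_cancel, sub_zero] at h0
    simp only [grr]
    rw [h0]
    have hcongr : Set.EqOn
        (fun u : ℝ => ((∑ i ∈ Finset.range r, u ^ i) - M) / u ^ (2 + α))
        (fun u : ℝ => (∑ i ∈ Finset.range r, u ^ (((i:ℝ) - 1 - α) - 1))
          - M * u ^ ((-1 - α : ℝ) - 1)) (Set.uIcc y 1) := by
      intro u hu
      rw [Set.uIcc_of_le hy1] at hu
      have hu0 : 0 < u := lt_of_lt_of_le hy0 hu.1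
      simp only
      rw [sub_div, Finset.sum_div]
      congr 1
      · refine Finset.sum_congr rfl fun i _ => ?_
        rw [← Real.rpow_natCast u i, ← Real.rpow_sub hu0]
        congr 1; ring
      · rw [div_eq_mul_inv, ← Real.rpow_neg hu0.le]
        congr 1; ring
    rw [intervalIntegral.integral_congr hcongr]
    have hsumInt : IntervalIntegrable
        (fun u : ℝ => ∑ i ∈ Finset.range r, u ^ (((i:ℝ) - 1 - α) - 1))
        MeasureTheory.volume y 1 := by
      have h := IntervalIntegrable.sum (f := fun (i : ℕ) (u : ℝ) => u ^ (((i:ℝ) - 1 - α) - 1))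
        (Finset.range r) (fun i _ => hcont _)
      rw [Finset.sum_fn] at h
      exact h
    rw [intervalIntegral.integral_sub hsumInt ((hcont _).const_mul M),
        intervalIntegral.integral_finset_sum (fun i _ => hcont _),
        intervalIntegral.integral_const_mul,
        key_int hy0 hy1 (-1 - α) (by intro h; linarith)]
    rw [hM]
    simp only [hA]
    rw [Finset.sum_sub_distrib, ← Finset.sum_mul]
    congr 1
    refine Finset.sum_congr rfl fun i _ => ?_
    rw [key_int hy0 hy1 _ (hβne i)]
  -- lower bound for small indices (i < α + 1)
  have lemA : ∀ i : ℕ, (i:ℝ) < α + 1 → -(1 / (α + 1 - (i:ℝ))) ≤ A i := by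
    intro i hi
    have hs : 0 < α + 1 - (i:ℝ) := by linarith
    set p := y ^ ((i:ℝ) - 1 - α) with hp
    set q := y ^ ((i:ℝ)) with hq
    have hp0 : 0 < p := Real.rpow_pos_of_pos hy0 _
    have hq0 : 0 ≤ q := (Real.rpow_pos_of_pos hy0 _).le
    have hqp : q ≤ p := by
      rw [hq, hyirw i, ← hp]
      nlinarith [Real.rpow_le_one hy0.le hy1 hα1p.le, Real.rpow_pos_of_pos hy0 (α+1)]
    rw [hArw i, ← hp, ← hq]
    have hβ : (i:ℝ) - 1 - α = -(α + 1 - (i:ℝ)) := by ring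
    rw [hβ]
    have hkey : (p - q) * (α + 1 - (i:ℝ)) ≤ p * (α + 1) := by
      have h1 : p - q ≤ p := by linarith
      have h2 : α + 1 - (i:ℝ) ≤ α + 1 := by
        have : (0:ℝ) ≤ (i:ℝ) := Nat.cast_nonneg i
        linarith
      nlinarith
    have heq : (1 - p) / -(α + 1 - (i:ℝ)) - (p - q) / (α + 1) + 1 / (α + 1 - (i:ℝ))
        = (p * (α + 1) - (p - q) * (α + 1 - (i:ℝ))) / ((α + 1 - (i:ℝ)) * (α + 1)) := by
      rw [div_neg]
      field_simp [hs.ne', hα1p.ne']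
      ring
    have hpos : 0 ≤ (p * (α + 1) - (p - q) * (α + 1 - (i:ℝ))) / ((α + 1 - (i:ℝ)) * (α + 1)) :=
      div_nonneg (by linarith) (by positivity)
    linarith [heq ▸ hpos]
  -- nonnegativity for large indices (i > α + 1)
  have lemB : ∀ i : ℕ, α + 1 < (i:ℝ) → 0 ≤ A i := by
    intro i hi
    set β := (i:ℝ) - 1 - α with hβ
    have hβ0 : 0 < β := by rw [hβ]; linarith
    have hAi : A i = ∫ u in y..1, (u ^ (β - 1) - y ^ β * u ^ ((α + 1) - 1)) := by
      rw [intervalIntegral.integral_sub (hcont _) ((hcont _).const_mul _),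
          intervalIntegral.integral_const_mul,
          key_int hy0 hy1 β hβ0.ne', key_int hy0 hy1 (α + 1) hα1p.ne',
          hArw i, hβ, hyirw i]
      ring
    rw [hAi]
    apply intervalIntegral.integral_nonneg hy1
    intro u hu
    have hu0 : 0 < u := lt_of_lt_of_le hy0 hu.1
    have h1 : y ^ β ≤ u ^ β := Real.rpow_le_rpow hy0.le hu.1 hβ0.le
    have h2 : u ^ ((α + 1) - 1) ≤ 1 := by
      apply Real.rpow_le_one hu0.le hu.2; linarith
    have h3 : u ^ (β - 1) = u ^ β / u := by
      rw [Real.rpow_sub hu0, Real.rpow_one]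
    have h4 : u ^ β ≤ u ^ β / u := by
      rw [le_div_iff₀ hu0]
      nlinarith [Real.rpow_pos_of_pos hu0 β, hu.2]
    have h5 : y ^ β * u ^ ((α + 1) - 1) ≤ u ^ β * 1 :=
      mul_le_mul h1 h2 (Real.rpow_nonneg hu0.le _) (Real.rpow_nonneg hu0.le _)
    show 0 ≤ u ^ (β - 1) - y ^ β * u ^ ((α + 1) - 1)
    rw [h3]
    nlinarith
  -- special bound for i = 1
  have hA1 : y ^ (-α) / (α * (α + 1)) - 1 / (α + 1 - ((1:ℕ):ℝ)) ≤ A 1 := by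
    have e0 : ((1:ℕ):ℝ) - 1 - α = -α := by push_cast; ring
    have e1 : y ^ (((1:ℕ):ℝ)) = y := by rw [Nat.cast_one, Real.rpow_one]
    have hA1' : A 1 = y ^ (-α) / (α * (α + 1)) - 1 / α + y / (α + 1) := by
      rw [hArw 1, e0, e1]
      field_simp [hα0.ne', hα1p.ne']
      ring
    rw [hA1', Nat.cast_one]
    have : (0:ℝ) < y / (α + 1) := by positivity
    have e2 : α + 1 - 1 = α := by ring
    rw [e2]
    linarith
  -- assemble
  rw [ge_iff_le, hLHS]
  have hrhs : y ^ (-α) * (1 / (α * (α + 1)) - y ^ α * ∑ i ∈ Finset.range (t + 2), 1 / (α + 1 - i))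
      = y ^ (-α) / (α * (α + 1)) - ∑ i ∈ Finset.range (t + 2), 1 / (α + 1 - (i:ℝ)) := by
    have hyy : y ^ (-α) * y ^ α = 1 := by
      rw [← Real.rpow_add hy0]; simp
    rw [mul_sub, ← mul_assoc, hyy, one_mul, mul_one_div]
  rw [hrhs]
  have hsplit : ∑ i ∈ Finset.range r, A i
      = ∑ i ∈ Finset.range (t + 2), A i + ∑ i ∈ Finset.Ico (t + 2) r, A i := by
    rw [Finset.range_eq_Ico, Finset.range_eq_Ico]
    exact (Finset.sum_Ico_consecutive A (Nat.zero_le _) htr).symm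
  have hB : 0 ≤ ∑ i ∈ Finset.Ico (t + 2) r, A i := by
    apply Finset.sum_nonneg
    intro i hi
    apply lemB
    have hit : t + 2 ≤ i := (Finset.mem_Ico.mp hi).1
    have : ((t:ℝ) + 2) ≤ (i:ℝ) := by exact_mod_cast hit
    linarith
  have hAmain : y ^ (-α) / (α * (α + 1)) - ∑ i ∈ Finset.range (t + 2), 1 / (α + 1 - (i:ℝ))
      ≤ ∑ i ∈ Finset.range (t + 2), A i := by
    have hbound : ∀ i ∈ Finset.range (t + 2),
        (if i = 1 then y ^ (-α) / (α * (α + 1)) else 0) - 1 / (α + 1 - (i:ℝ)) ≤ A i := by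
      intro i hi
      rcases eq_or_ne i 1 with h1 | h1
      · subst h1
        simpa using hA1
      · rw [if_neg h1]
        have hit : i < t + 2 := Finset.mem_range.mp hi
        have hile : (i:ℝ) ≤ (t:ℝ) + 1 := by exact_mod_cast Nat.lt_succ_iff.mp hit
        have := lemA i (by linarith)
        linarith
    calc y ^ (-α) / (α * (α + 1)) - ∑ i ∈ Finset.range (t + 2), 1 / (α + 1 - (i:ℝ))
        = ∑ i ∈ Finset.range (t + 2),
            ((if i = 1 then y ^ (-α) / (α * (α + 1)) else 0) - 1 / (α + 1 - (i:ℝ))) := by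
          rw [Finset.sum_sub_distrib, Finset.sum_ite_eq' (Finset.range (t + 2)) 1
            (fun _ => y ^ (-α) / (α * (α + 1)))]
          simp
      _ ≤ ∑ i ∈ Finset.range (t + 2), A i := Finset.sum_le_sum hbound
  rw [hsplit]
  linarith
end

section
/- Let r ≥ 2 be an integer and ξ a probability distribution on integers ≥ r with E[ξ^r] < ∞. Define G_ξ^r(x) = ∑_{k≥r} P(ξ=k) g_k^r(x) where g_k^r(x) = ∑_{i=0}^{r-1} C(k,i) x^{k-i-1} (1-x)^i. Then for every t ∈ [0,1), G_ξ^r(1-t) ≥ (1 - t^r E[ξ^r]/r!)/(1-t). -/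
lemma gfun_key (r k : ℕ) (hrk : r ≤ k) (t : ℝ) (ht0 : 0 ≤ t) (ht1 : t < 1) :
    1 - t ^ r * (k : ℝ) ^ r / (r.factorial : ℝ) ≤ (1 - t) * gfun k r (1 - t) := by
  set x : ℝ := 1 - t with hx
  have hx0 : 0 ≤ x := by simp [hx]; linarith
  have hxt : x + t = 1 := by simp [hx]
  have hxt' : t + x = 1 := by rw [add_comm]; exact hxt
  -- (1-t) * gfun = ∑_{i<r} C(k,i) x^{k-i} t^i
  have h1 : x * gfun k r x =
      ∑ i ∈ Finset.range r, (k.choose i : ℝ) * x ^ (k - i) * t ^ i := by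
    unfold gfun
    rw [Finset.mul_sum]
    refine Finset.sum_congr rfl fun i hi => ?_
    have hik : i < k := lt_of_lt_of_le (Finset.mem_range.mp hi) hrk
    have h2 : k - i - 1 + 1 = k - i := by omega
    have h3 : (1 : ℝ) - x = t := by simp [hx]
    have hxp : x ^ (k - i) = x * x ^ (k - i - 1) := by
      conv_lhs => rw [← h2]
      rw [pow_succ']
    rw [h3, hxp]
    ring
  -- binomial theorem
  have hbin : ∑ i ∈ Finset.range (k + 1), (k.choose i : ℝ) * x ^ (k - i) * t ^ i = 1 := by
    have := add_pow t x k
    rw [hxt', one_pow] at this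
    rw [this]
    refine Finset.sum_congr rfl fun i hi => ?_
    ring
  have hsplit : ∑ i ∈ Finset.range r, (k.choose i : ℝ) * x ^ (k - i) * t ^ i
      = 1 - ∑ i ∈ Finset.Ico r (k + 1), (k.choose i : ℝ) * x ^ (k - i) * t ^ i := by
    rw [← hbin, ← Finset.sum_range_add_sum_Ico _ (by omega : r ≤ k + 1)]
    ring
  -- tail bound
  have htail : ∑ i ∈ Finset.Ico r (k + 1), (k.choose i : ℝ) * x ^ (k - i) * t ^ i
      ≤ t ^ r * (k : ℝ) ^ r / (r.factorial : ℝ) := by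
    have step1 : ∑ i ∈ Finset.Ico r (k + 1), (k.choose i : ℝ) * x ^ (k - i) * t ^ i
        ≤ ∑ i ∈ Finset.Ico r (k + 1),
            (k.choose r : ℝ) * (((k - r).choose (i - r) : ℝ) * x ^ (k - i) * t ^ i) := by
      refine Finset.sum_le_sum fun i hi => ?_
      obtain ⟨hri, hik⟩ := Finset.mem_Ico.mp hi
      have hik' : i ≤ k := by omega
      have hcm := Nat.choose_mul (n := k) hri
      have hc1 : k.choose i ≤ k.choose r * (k - r).choose (i - r) := by
        calc k.choose i ≤ k.choose i * i.choose r :=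
              Nat.le_mul_of_pos_right _ (Nat.choose_pos hri)
          _ = k.choose r * (k - r).choose (i - r) := hcm
      have hc1' : (k.choose i : ℝ) ≤ (k.choose r : ℝ) * ((k - r).choose (i - r) : ℝ) := by
        exact_mod_cast hc1
      have hnn : (0:ℝ) ≤ x ^ (k - i) * t ^ i :=
        mul_nonneg (pow_nonneg hx0 _) (pow_nonneg ht0 _)
      calc (k.choose i : ℝ) * x ^ (k - i) * t ^ i
          = (k.choose i : ℝ) * (x ^ (k - i) * t ^ i) := by ring
        _ ≤ ((k.choose r : ℝ) * ((k - r).choose (i - r) : ℝ)) * (x ^ (k - i) * t ^ i) :=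
            mul_le_mul_of_nonneg_right hc1' hnn
        _ = (k.choose r : ℝ) * (((k - r).choose (i - r) : ℝ) * x ^ (k - i) * t ^ i) := by ring
    have step2 : ∑ i ∈ Finset.Ico r (k + 1),
        (((k - r).choose (i - r) : ℝ) * x ^ (k - i) * t ^ i)
        = t ^ r := by
      rw [Finset.sum_Ico_eq_sum_range]
      have hkr : k + 1 - r = (k - r) + 1 := by omega
      rw [hkr]
      have : ∀ j ∈ Finset.range ((k - r) + 1),
          (((k - r).choose (r + j - r) : ℝ) * x ^ (k - (r + j)) * t ^ (r + j))
          = t ^ r * (t ^ j * x ^ ((k - r) - j) * ((k - r).choose j : ℝ)) := by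
        intro j hj
        have h4 : r + j - r = j := by omega
        have h5 : k - (r + j) = (k - r) - j := by omega
        rw [h4, h5, pow_add]
        ring
      rw [Finset.sum_congr rfl this, ← Finset.mul_sum, ← add_pow t x (k - r), hxt', one_pow,
        mul_one]
    have step3 : (k.choose r : ℝ) ≤ (k : ℝ) ^ r / (r.factorial : ℝ) :=
      Nat.choose_le_pow_div r k
    calc ∑ i ∈ Finset.Ico r (k + 1), (k.choose i : ℝ) * x ^ (k - i) * t ^ i
        ≤ (k.choose r : ℝ) * t ^ r := by
          rw [← Finset.mul_sum] at step1
          rw [step2] at step1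
          exact step1
      _ ≤ ((k : ℝ) ^ r / (r.factorial : ℝ)) * t ^ r :=
          mul_le_mul_of_nonneg_right step3 (pow_nonneg ht0 _)
      _ = t ^ r * (k : ℝ) ^ r / (r.factorial : ℝ) := by ring
  rw [h1, hsplit]
  linarith

lemma gfun_nonneg (k r : ℕ) (x : ℝ) (hx0 : 0 ≤ x) (hx1 : x ≤ 1) : 0 ≤ gfun k r x := by
  unfold gfun
  refine Finset.sum_nonneg fun i _ => ?_
  have : (0:ℝ) ≤ 1 - x := by linarith
  positivity

lemma gfun_le (k r : ℕ) (hk : 1 ≤ k) (x : ℝ) (hx0 : 0 ≤ x) (hx1 : x ≤ 1) :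
    gfun k r x ≤ (r : ℝ) * (k : ℝ) ^ r := by
  unfold gfun
  have h1x : (0:ℝ) ≤ 1 - x := by linarith
  calc ∑ i ∈ Finset.range r, (k.choose i : ℝ) * x ^ (k - i - 1) * (1 - x) ^ i
      ≤ ∑ i ∈ Finset.range r, (k : ℝ) ^ r := by
        refine Finset.sum_le_sum fun i hi => ?_
        have hc : (k.choose i : ℝ) ≤ (k : ℝ) ^ i := by exact_mod_cast Nat.choose_le_pow k i
        have hpow : (k : ℝ) ^ i ≤ (k : ℝ) ^ r := by
          apply pow_le_pow_right₀ (by exact_mod_cast hk)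
          exact le_of_lt (Finset.mem_range.mp hi)
        have hx' : x ^ (k - i - 1) ≤ 1 := pow_le_one₀ hx0 hx1
        have h1x' : (1 - x) ^ i ≤ 1 := pow_le_one₀ h1x (by linarith)
        have ha : (0:ℝ) ≤ (k.choose i : ℝ) * x ^ (k - i - 1) := by positivity
        calc (k.choose i : ℝ) * x ^ (k - i - 1) * (1 - x) ^ i
            ≤ (k.choose i : ℝ) * x ^ (k - i - 1) * 1 :=
              mul_le_mul_of_nonneg_left h1x' ha
          _ = (k.choose i : ℝ) * x ^ (k - i - 1) := by ring
          _ ≤ (k.choose i : ℝ) * 1 :=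
              mul_le_mul_of_nonneg_left hx' (Nat.cast_nonneg _)
          _ = (k.choose i : ℝ) := by ring
          _ ≤ (k : ℝ) ^ i := hc
          _ ≤ (k : ℝ) ^ r := hpow
    _ = (r : ℝ) * (k : ℝ) ^ r := by
        rw [Finset.sum_const, Finset.card_range, nsmul_eq_mul]

/-- For `r ≥ 2` and a probability distribution `p` on the integers `≥ r` with finite `r`-th
moment, `G_ξ^r(1-t) = ∑_{k≥r} P(ξ=k) g_k^r(1-t) ≥ (1 - t^r E[ξ^r]/r!)/(1-t)` for `t ∈ [0,1)`. -/
theorem stmt_11 (r : ℕ) (hr : 2 ≤ r) (p : ℕ → ℝ)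
    (hp0 : ∀ k, 0 ≤ p k) (hpsupp : ∀ k, k < r → p k = 0) (hp1 : ∑' k, p k = 1)
    (hmom : Summable fun k => p k * (k : ℝ) ^ r)
    (t : ℝ) (ht : t ∈ Set.Ico (0:ℝ) 1) :
    (∑' k, p k * gfun k r (1 - t))
      ≥ (1 - t ^ r * (∑' k, p k * (k : ℝ) ^ r) / (r.factorial : ℝ)) / (1 - t) := by
  obtain ⟨ht0, ht1⟩ := ht
  have hx0 : (0:ℝ) ≤ 1 - t := by linarith
  have hx1 : (1:ℝ) - t ≤ 1 := by linarith
  have hxpos : (0:ℝ) < 1 - t := by linarith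
  have hfac : (0:ℝ) < (r.factorial : ℝ) := by exact_mod_cast r.factorial_pos
  have hpsum : Summable p := by
    by_contra h
    rw [tsum_eq_zero_of_not_summable h] at hp1
    norm_num at hp1
  -- summability of LHS
  have hfnn : ∀ k, 0 ≤ p k * gfun k r (1 - t) :=
    fun k => mul_nonneg (hp0 k) (gfun_nonneg k r _ hx0 hx1)
  have hle : ∀ k, p k * gfun k r (1 - t) ≤ (r : ℝ) * (p k * (k : ℝ) ^ r) := by
    intro k
    rcases Nat.eq_zero_or_pos k with hk | hk
    · subst hk
      rw [hpsupp 0 (by omega)]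
      simp
    · calc p k * gfun k r (1 - t) ≤ p k * ((r : ℝ) * (k : ℝ) ^ r) :=
          mul_le_mul_of_nonneg_left (gfun_le k r hk _ hx0 hx1) (hp0 k)
        _ = (r : ℝ) * (p k * (k : ℝ) ^ r) := by ring
  have hfsum : Summable (fun k => p k * gfun k r (1 - t)) :=
    Summable.of_nonneg_of_le hfnn hle (hmom.mul_left _)
  -- RHS as a tsum
  set M : ℝ := ∑' k, p k * (k : ℝ) ^ r with hM
  have hgsum : Summable (fun k => p k * (1/(1-t)) -
      (t ^ r / ((r.factorial : ℝ) * (1 - t))) * (p k * (k : ℝ) ^ r)) :=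
    (hpsum.mul_right _).sub (hmom.mul_left _)
  have hgts : ∑' k, (p k * (1/(1-t)) -
      (t ^ r / ((r.factorial : ℝ) * (1 - t))) * (p k * (k : ℝ) ^ r))
      = (1 - t ^ r * M / (r.factorial : ℝ)) / (1 - t) := by
    rw [Summable.tsum_sub (hpsum.mul_right _) (hmom.mul_left _), tsum_mul_right, tsum_mul_left, hp1, ← hM]
    field_simp
  rw [ge_iff_le, ← hgts]
  apply Summable.tsum_le_tsum _ hgsum hfsum
  intro k
  rcases lt_or_ge k r with hk | hk
  · rw [hpsupp k hk]
    simp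
  · have hkey := gfun_key r k hk t ht0 ht1
    have h2 : p k * (1/(1-t)) - (t ^ r / ((r.factorial : ℝ) * (1 - t))) * (p k * (k : ℝ) ^ r)
        = p k * ((1 - t ^ r * (k : ℝ) ^ r / (r.factorial : ℝ)) / (1 - t)) := by
      field_simp
    rw [h2]
    apply mul_le_mul_of_nonneg_left _ (hp0 k)
    rw [div_le_iff₀ hxpos]
    linarith [hkey]
end
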